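/- Let n ≥ 1 and for i : Fin n write aᵢ = FreeGroup.of i in FreeGroup (Fin n). Then the quotient of FreeGroup (Fin n) by the normal closure of {(a₀ * a₁ * ⋯ * aₙ₋₂ * aₙ₋₁) * (a₀⁻¹ * a₁⁻¹ * ⋯ * aₙ₋₂⁻¹) * aₙ₋₁} is isomorphic to the quotient of FreeGroup (Fin n) by the normal closure of {a₀² * a₁² * ⋯ * aₙ₋₁²}. (Example (iv): the word a₁a₂⋯aₙ₋₁aₙ ā₁ā₂⋯āₙ₋₁aₙ represents ℙ^{#n}.) -/

import Mathlib

namespace ExIV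

open FreeGroup

def gen (n j : ℕ) : FreeGroup (Fin n) := if h : j < n then .of ⟨j, h⟩ else 1

def Pp (n : ℕ) : ℕ → FreeGroup (Fin n)
  | 0 => 1
  | k+1 => Pp n k * gen n k

def Cc (n : ℕ) : ℕ → FreeGroup (Fin n)
  | 0 => 1
  | k+1 => Cc n k * (gen n k)⁻¹

def Dd (n : ℕ) : ℕ → FreeGroup (Fin n)
  | 0 => 1
  | k+1 => gen n (n-2-k) * Dd n k

def Ee (n : ℕ) : ℕ → FreeGroup (Fin n)
  | 0 => 1
  | m+1 => Ee n m * (Dd n (m+1))⁻¹ * Dd n m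

def Qq (n : ℕ) : ℕ → FreeGroup (Fin n)
  | 0 => 1
  | k+1 => Qq n k * gen n k * gen n k

def fh (n : ℕ) : FreeGroup (Fin n) →* FreeGroup (Fin n) :=
  FreeGroup.lift fun i =>
    if (i:ℕ) = n-1 then Pp n n
    else Cc n (n-2-(i:ℕ)) * (gen n (n-2-(i:ℕ)))⁻¹ * (Cc n (n-2-(i:ℕ)))⁻¹

def gh (n : ℕ) : FreeGroup (Fin n) →* FreeGroup (Fin n) :=
  FreeGroup.lift fun i =>
    if (i:ℕ) = n-1 then (Ee n (n-1))⁻¹ * gen n (n-1)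
    else (Dd n ((i:ℕ)+1))⁻¹ * Dd n (i:ℕ)

variable {n : ℕ}

lemma gen_eq {j : ℕ} (h : j < n) : gen n j = .of ⟨j, h⟩ := dif_pos h

lemma fh_gen_last (hn : 1 ≤ n) : fh n (gen n (n-1)) = Pp n n := by
  rw [gen_eq (by omega), fh, FreeGroup.lift_apply_of, if_pos rfl]

lemma fh_gen {j : ℕ} (hj : j < n-1) :
    fh n (gen n j) = Cc n (n-2-j) * (gen n (n-2-j))⁻¹ * (Cc n (n-2-j))⁻¹ := by
  rw [gen_eq (by omega), fh, FreeGroup.lift_apply_of, if_neg (by simp; omega)]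

lemma gh_gen_last (hn : 1 ≤ n) : gh n (gen n (n-1)) = (Ee n (n-1))⁻¹ * gen n (n-1) := by
  rw [gen_eq (by omega), gh, FreeGroup.lift_apply_of, if_pos rfl, gen_eq (by omega : n-1 < n)]

lemma gh_gen {j : ℕ} (hj : j < n-1) :
    gh n (gen n j) = (Dd n (j+1))⁻¹ * Dd n j := by
  rw [gen_eq (by omega), gh, FreeGroup.lift_apply_of, if_neg (by simp; omega)]

lemma fh_D : ∀ k, k ≤ n-1 → fh n (Dd n k) = Cc n k := by
  intro k
  induction k with
  | zero => intro _; simp [Dd, Cc]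
  | succ k ih =>
    intro hk
    rw [Dd, _root_.map_mul, ih (by omega), fh_gen (by omega)]
    have hk2 : n-2-(n-2-k) = k := by omega
    rw [hk2, Cc]
    group

lemma gh_C : ∀ k, k ≤ n-1 → gh n (Cc n k) = Dd n k := by
  intro k
  induction k with
  | zero => intro _; simp [Dd, Cc]
  | succ k ih =>
    intro hk
    rw [Cc, _root_.map_mul, _root_.map_inv, ih (by omega), gh_gen (by omega), Dd]
    have hk2 : gen n (n-2-(n-2-k)) = gen n k := by rw [show n-2-(n-2-k) = k by omega]
    rw [show gen n (n-2-k) * Dd n k = Dd n (k+1) from (Dd n (k+1) |> fun _ => rfl)]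
    group

lemma fh_E : ∀ m, m ≤ n-1 → fh n (Ee n m) = Pp n m := by
  intro m
  induction m with
  | zero => intro _; simp [Ee, Pp]
  | succ m ih =>
    intro hm
    rw [Ee, _root_.map_mul, _root_.map_mul, _root_.map_inv, ih (by omega), fh_D (m+1) (by omega),
      fh_D m (by omega), Pp, Cc]
    group

lemma gh_P : ∀ m, m ≤ n-1 → gh n (Pp n m) = Ee n m := by
  intro m
  induction m with
  | zero => intro _; simp [Ee, Pp]
  | succ m ih =>
    intro hm
    rw [Pp, _root_.map_mul, ih (by omega), gh_gen (by omega), Ee]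
    group

lemma gh_comp_fh : (gh n).comp (fh n) = MonoidHom.id _ := by
  apply FreeGroup.ext_hom
  intro a
  simp only [MonoidHom.comp_apply, MonoidHom.id_apply]
  have ha : (a:ℕ) < n := a.isLt
  have h1 : 1 ≤ n := by omega
  have hgen : FreeGroup.of a = gen n (a:ℕ) := by
    rw [gen_eq ha]
  rw [hgen]
  by_cases h : (a:ℕ) = n-1
  · rw [h, fh_gen_last h1]
    have : Pp n n = Pp n (n-1) * gen n (n-1) := by
      rw [show n = (n-1)+1 by omega] ; rfl
    rw [this, _root_.map_mul, gh_P (n-1) le_rfl, gh_gen_last h1]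
    group
  · have hlt : (a:ℕ) < n-1 := by omega
    rw [fh_gen hlt, _root_.map_mul, _root_.map_mul, _root_.map_inv, _root_.map_inv,
      gh_C _ (by omega), gh_gen (by omega)]
    rw [show Dd n (n-2-(a:ℕ)+1) = gen n (n-2-(n-2-(a:ℕ))) * Dd n (n-2-(a:ℕ)) from rfl]
    rw [show n-2-(n-2-(a:ℕ)) = (a:ℕ) by omega]
    group

lemma fh_comp_gh : (fh n).comp (gh n) = MonoidHom.id _ := by
  apply FreeGroup.ext_hom
  intro a
  simp only [MonoidHom.comp_apply, MonoidHom.id_apply]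
  have ha : (a:ℕ) < n := a.isLt
  have h1 : 1 ≤ n := by omega
  have hgen : FreeGroup.of a = gen n (a:ℕ) := by
    rw [gen_eq ha]
  rw [hgen]
  by_cases h : (a:ℕ) = n-1
  · rw [h, gh_gen_last h1, _root_.map_mul, _root_.map_inv, fh_E (n-1) le_rfl, fh_gen_last h1]
    have : Pp n n = Pp n (n-1) * gen n (n-1) := by
      rw [show n = (n-1)+1 by omega] ; rfl
    rw [this]
    group
  · have hlt : (a:ℕ) < n-1 := by omega
    rw [gh_gen hlt, _root_.map_mul, _root_.map_inv, fh_D _ (by omega), fh_D _ (by omega)]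
    rw [show Cc n ((a:ℕ)+1) = Cc n (a:ℕ) * (gen n (a:ℕ))⁻¹ from rfl]
    group

/-- the key relator computation -/
lemma fh_Q : ∀ m, m ≤ n-1 →
    fh n (Qq n m) = Cc n (n-1) * (Dd n m)⁻¹ * (Cc n (n-1-m))⁻¹ := by
  intro m
  induction m with
  | zero => intro _; simp [Qq, Dd]
  | succ m ih =>
    intro hm
    rw [Qq, _root_.map_mul, _root_.map_mul, ih (by omega), fh_gen (by omega)]
    rw [show Dd n (m+1) = gen n (n-2-m) * Dd n m from rfl]
    rw [show Cc n (n-1-m) = Cc n (n-2-m) * (gen n (n-2-m))⁻¹ by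
      rw [show n-1-m = (n-2-m)+1 by omega]; rfl]
    rw [show n-1-(m+1) = n-2-m by omega]
    group

lemma P_D : ∀ k, k ≤ n-1 → Pp n (n-1-k) * Dd n k = Pp n (n-1) := by
  intro k
  induction k with
  | zero => intro _; simp [Dd]
  | succ k ih =>
    intro hk
    rw [show Dd n (k+1) = gen n (n-2-k) * Dd n k from rfl]
    rw [show Pp n (n-1-k) = Pp n (n-2-k) * gen n (n-2-k) by
      rw [show n-1-k = (n-2-k)+1 by omega]; rfl] at ih
    rw [show n-1-(k+1) = n-2-k by omega, ← mul_assoc]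
    exact ih (by omega)

lemma fh_Q_full (hn : 1 ≤ n) :
    fh n (Qq n n) = Cc n (n-1) * gen n (n-1) * Pp n n := by
  have hQn : Qq n n = Qq n (n-1) * gen n (n-1) * gen n (n-1) := by
    rw [show n = (n-1)+1 by omega]; rfl
  rw [hQn, _root_.map_mul, _root_.map_mul, fh_Q (n-1) le_rfl, fh_gen_last hn]
  have hD : Dd n (n-1) = Pp n (n-1) := by
    have := P_D (n := n) (n-1) le_rfl
    simpa [Pp] using this
  have hPn : Pp n n = Pp n (n-1) * gen n (n-1) := by
    rw [show n = (n-1)+1 by omega]; rfl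
  rw [hD, hPn, show n-1-(n-1) = 0 by omega]
  simp only [Cc]
  group

lemma prod_ofFn_gen : ∀ k, k ≤ n → (List.ofFn fun i : Fin k => gen n (i:ℕ)).prod = Pp n k := by
  intro k
  induction k with
  | zero => intro _; simp [Pp]
  | succ k ih =>
    intro hk
    rw [List.ofFn_succ', List.prod_concat]
    simp only [Fin.coe_castSucc, Fin.val_last]
    rw [ih (by omega)]
    rfl

lemma prod_ofFn_inv : ∀ k, k ≤ n → (List.ofFn fun i : Fin k => (gen n (i:ℕ))⁻¹).prod = Cc n k := by
  intro k
  induction k with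
  | zero => intro _; simp [Cc]
  | succ k ih =>
    intro hk
    rw [List.ofFn_succ', List.prod_concat]
    simp only [Fin.coe_castSucc, Fin.val_last]
    rw [ih (by omega)]
    rfl

lemma prod_ofFn_sq : ∀ k, k ≤ n → (List.ofFn fun i : Fin k => gen n (i:ℕ) * gen n (i:ℕ)).prod = Qq n k := by
  intro k
  induction k with
  | zero => intro _; simp [Qq]
  | succ k ih =>
    intro hk
    rw [List.ofFn_succ', List.prod_concat]
    simp only [Fin.coe_castSucc, Fin.val_last]
    rw [ih (by omega), ← mul_assoc]
    rfl

end ExIV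

/-- Example (iv): the word `a₁a₂⋯aₙ₋₁aₙ ā₁ā₂⋯āₙ₋₁ aₙ` represents the connected sum of
`n` projective planes `ℙ^{#n}`. -/
theorem example_iv_iso_projective_sum (n : ℕ) (hn : 1 ≤ n) :
    Nonempty
      ((FreeGroup (Fin n) ⧸ Subgroup.normalClosure
          {(List.ofFn fun i : Fin n => FreeGroup.of i).prod *
           (List.ofFn fun i : Fin (n - 1) =>
              (FreeGroup.of (Fin.castLE (Nat.sub_le n 1) i))⁻¹).prod *
           FreeGroup.of (⟨n - 1, by omega⟩ : Fin n)}) ≃*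
       (FreeGroup (Fin n) ⧸ Subgroup.normalClosure
          {(List.ofFn fun i : Fin n => FreeGroup.of i * FreeGroup.of i).prod})) := by
  have hof : ∀ i : Fin n, FreeGroup.of i = ExIV.gen n (i:ℕ) := by
    intro i; simp [ExIV.gen]
  have hw : (List.ofFn fun i : Fin n => FreeGroup.of i).prod = ExIV.Pp n n := by
    rw [show (fun i : Fin n => FreeGroup.of i) = fun i : Fin n => ExIV.gen n (i:ℕ) from
      funext hof]
    exact ExIV.prod_ofFn_gen n le_rfl
  have hc : (List.ofFn fun i : Fin (n - 1) =>
      (FreeGroup.of (Fin.castLE (Nat.sub_le n 1) i))⁻¹).prod = ExIV.Cc n (n-1) := by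
    rw [show (fun i : Fin (n-1) => (FreeGroup.of (Fin.castLE (Nat.sub_le n 1) i))⁻¹)
        = fun i : Fin (n-1) => (ExIV.gen n (i:ℕ))⁻¹ by
      funext i; rw [hof]; rfl]
    exact ExIV.prod_ofFn_inv (n-1) (Nat.sub_le n 1)
  have hg : FreeGroup.of (⟨n - 1, by omega⟩ : Fin n) = ExIV.gen n (n-1) :=
    (ExIV.gen_eq (by omega)).symm
  have ht : (List.ofFn fun i : Fin n => FreeGroup.of i * FreeGroup.of i).prod
      = ExIV.Qq n n := by
    rw [show (fun i : Fin n => FreeGroup.of i * FreeGroup.of i)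
        = fun i : Fin n => ExIV.gen n (i:ℕ) * ExIV.gen n (i:ℕ) by
      funext i; rw [hof]]
    exact ExIV.prod_ofFn_sq n le_rfl
  rw [hw, hc, hg, ht]
  set z := ExIV.Pp n n with hz
  set w := z * ExIV.Cc n (n-1) * ExIV.gen n (n-1) with hwdef
  set t := ExIV.Qq n n with htdef
  -- the automorphism
  let e : FreeGroup (Fin n) ≃* FreeGroup (Fin n) :=
    MonoidHom.toMulEquiv (ExIV.fh n) (ExIV.gh n) ExIV.gh_comp_fh ExIV.fh_comp_gh
  have he : ⇑e = ⇑(ExIV.fh n) := rfl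
  have het : e t = z⁻¹ * w * z := by
    rw [he, htdef, ExIV.fh_Q_full hn, hwdef]
    group
    rfl
  have hmap : (Subgroup.normalClosure {t}).map e.toMonoidHom
      = Subgroup.normalClosure {w} := by
    have hem : e.toMonoidHom = ExIV.fh n := rfl
    rw [hem, Subgroup.map_normalClosure _ _
      (show Function.Surjective (ExIV.fh n) from e.surjective)]
    have himg : (ExIV.fh n) '' {t} = {z⁻¹ * w * z} := by
      rw [Set.image_singleton, ← he, het]
    rw [himg]
    apply le_antisymm
    · apply Subgroup.normalClosure_le_normal
      intro x hx
      rw [Set.mem_singleton_iff] at hx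
      subst hx
      have := Subgroup.Normal.conj_mem (Subgroup.normalClosure_normal (s := {w}))
        w (Subgroup.subset_normalClosure rfl) z⁻¹
      simpa using this
    · apply Subgroup.normalClosure_le_normal
      intro x hx
      rw [Set.mem_singleton_iff] at hx
      subst hx
      have := Subgroup.Normal.conj_mem
        (Subgroup.normalClosure_normal (s := ({z⁻¹ * w * z} : Set _)))
        (z⁻¹ * w * z) (Subgroup.subset_normalClosure rfl) z
      simpa [mul_assoc] using this
  exact ⟨(QuotientGroup.congr (Subgroup.normalClosure {t})
    (Subgroup.normalClosure {w}) e hmap).symm⟩
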